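/- Let c ∈ ℂ and let C = max(2·3^(1/4), √|Re(c)|). Let x, y, z, t ∈ ℂ satisfy P(x,y,z,t) = 2·Re(c). If |x| ≥ C, |y| ≥ C and |t| ≥ |z|, then (C/4)·max(|x|, |y|) < |t| < 5·|x|·|y|. -/

import Mathlib

set_option maxHeartbeats 1000000

/-- The expression `P(x,y,z,t)` from the trace relation. -/
noncomputable def Pfun (x y z t : ℂ) : ℝ :=
  ‖x‖ ^ 2 * ‖y‖ ^ 2 + ‖x‖ ^ 2 + ‖y‖ ^ 2 +
    ‖z‖ ^ 2 + ‖t‖ ^ 2 - 2 * (x * y * (starRingEnd ℂ) z).re -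
    2 * ((starRingEnd ℂ) x * y * t).re - 3

theorem bound_lemma (c : ℂ) (C : ℝ)
    (hC : C = max (2 * (3 : ℝ) ^ ((1 : ℝ) / 4)) (Real.sqrt |c.re|))
    (x y z t : ℂ) (hP : Pfun x y z t = 2 * c.re)
    (hx : C ≤ ‖x‖) (hy : C ≤ ‖y‖)
    (hzt : ‖z‖ ≤ ‖t‖) :
    C / 4 * max (‖x‖) (‖y‖) < ‖t‖ ∧
      ‖t‖ < 5 * ‖x‖ * ‖y‖ := by
  set a := ‖x‖ with ha
  set b := ‖y‖ with hb
  set u := ‖z‖ with hu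
  set v := ‖t‖ with hv
  have hu0 : 0 ≤ u := norm_nonneg z
  have hv0 : 0 ≤ v := norm_nonneg t
  -- C positivity and lower bound
  have h3 : (1:ℝ) ≤ (3 : ℝ) ^ ((1 : ℝ) / 4) := by
    calc (1:ℝ) = (3:ℝ) ^ (0:ℝ) := (Real.rpow_zero 3).symm
      _ ≤ (3:ℝ) ^ ((1:ℝ)/4) :=
        Real.rpow_le_rpow_of_exponent_le (by norm_num) (by norm_num)
  have hC0 : 0 < C := by
    rw [hC]; apply lt_of_lt_of_le _ (le_max_left _ _); nlinarith
  -- |c.re| ≤ C^2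
  have hcre : |c.re| ≤ C ^ 2 := by
    have h1 : Real.sqrt |c.re| ≤ C := hC ▸ le_max_right _ _
    have h2 : Real.sqrt |c.re| ^ 2 = |c.re| := Real.sq_sqrt (abs_nonneg _)
    nlinarith [Real.sqrt_nonneg |c.re|]
  have hcre' : 2 * c.re ≤ 2 * C ^ 2 := by
    have := le_abs_self c.re; linarith
  -- 4 √3 ≤ C^2
  have hC48 : 4 * Real.sqrt 3 ≤ C ^ 2 := by
    have h1 : 2 * (3 : ℝ) ^ ((1 : ℝ) / 4) ≤ C := hC ▸ le_max_left _ _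
    have h2 : ((3 : ℝ) ^ ((1 : ℝ) / 4)) ^ 2 = Real.sqrt 3 := by
      rw [← Real.rpow_natCast ((3:ℝ) ^ ((1:ℝ)/4)) 2, ← Real.rpow_mul (by norm_num)]
      rw [Real.sqrt_eq_rpow]; norm_num
    nlinarith [Real.rpow_nonneg (show (0:ℝ) ≤ 3 by norm_num) ((1:ℝ)/4)]
  have hs3 : Real.sqrt 3 ^ 2 = 3 := Real.sq_sqrt (by norm_num)
  have hs3' : (1:ℝ) ≤ Real.sqrt 3 := by
    nlinarith [Real.sqrt_nonneg 3]
  have hC2_48 : 48 ≤ (C ^ 2) ^ 2 := by nlinarith [Real.sqrt_nonneg 3]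
  -- w := a*b ≥ C^2
  have hab : C ^ 2 ≤ a * b := by nlinarith
  have hw48 : 48 ≤ (a * b) ^ 2 := by nlinarith
  -- real part bounds
  have hre1 : (x * y * (starRingEnd ℂ) z).re ≤ a * b * u := by
    calc (x * y * (starRingEnd ℂ) z).re ≤ ‖x * y * (starRingEnd ℂ) z‖ :=
          Complex.re_le_norm _
      _ = a * b * u := by simp [norm_mul, Complex.norm_conj, ha, hb, hu, hv]
  have hre2 : ((starRingEnd ℂ) x * y * t).re ≤ a * b * v := by
    calc ((starRingEnd ℂ) x * y * t).re ≤ ‖(starRingEnd ℂ) x * y * t‖ :=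
          Complex.re_le_norm _
      _ = a * b * v := by simp [norm_mul, Complex.norm_conj, ha, hb, hu, hv]
  -- main inequality
  have hmain : a ^ 2 * b ^ 2 + a ^ 2 + b ^ 2 + u ^ 2 + v ^ 2 - 3 - 2 * c.re
      ≤ 2 * (a * b * u) + 2 * (a * b * v) := by
    have := hP
    unfold Pfun at this
    rw [← ha, ← hb, ← hu, ← hv] at this
    linarith
  have hkey : (a * b) ^ 2 + u ^ 2 + v ^ 2 - 3 ≤ 2 * (a * b) * u + 2 * (a * b) * v := by
    nlinarith
  constructor
  · by_contra h
    push_neg at h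
    have ha0 : (0:ℝ) ≤ a := norm_nonneg x
    have hb0 : (0:ℝ) ≤ b := norm_nonneg y
    have hm : C * max a b ≤ a * b := by
      rcases le_total a b with hab' | hab'
      · rw [max_eq_right hab']
        exact mul_le_mul_of_nonneg_right hx hb0
      · rw [max_eq_left hab']
        calc C * a = a * C := mul_comm _ _
          _ ≤ a * b := mul_le_mul_of_nonneg_left hy ha0
    have h4v : 4 * v ≤ a * b := by
      have : 4 * v ≤ C * max a b := by linarith
      linarith
    have h4u : 4 * u ≤ a * b := le_trans (by linarith) h4v
    have p1 : 0 ≤ (a * b - 4 * u) * (7 * (a * b) - 4 * u) :=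
      mul_nonneg (by linarith) (by linarith)
    have p2 : 0 ≤ (a * b - 4 * v) * (7 * (a * b) - 4 * v) :=
      mul_nonneg (by linarith) (by linarith)
    nlinarith [p1, p2, hkey, hw48]
  · by_contra h
    push_neg at h
    have hw0 : (0:ℝ) ≤ a * b := le_trans (by positivity) hab
    have p3 : 0 ≤ (v - 5 * (a * b)) * v := mul_nonneg (by linarith) hv0
    have p4 : 0 ≤ (v - u) * (a * b) := mul_nonneg (by linarith) hw0
    nlinarith [p3, p4, hkey, hw48]
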